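/- Let n, k be integers with 1 ≤ k ≤ n, let f be a nonzero polynomial with nonnegative integer coefficients, and let s⃗ = (s₁,…,s_k) be a k-tuple of positive integers. Assume either deg f ≥ 2, or f is linear and s_j ≥ 2 for all 1 ≤ j ≤ k. Then H_{k,f}(s⃗,n) := ∑_{1 ≤ i₁ < ⋯ < i_k ≤ n} ∏_{j=1}^k 1/f(i_j)^{s_j} and H*_{k,f}(s⃗,n) := ∑_{1 ≤ i₁ ≤ ⋯ ≤ i_k ≤ n} ∏_{j=1}^k 1/f(i_j)^{s_j} are not integers, except when f(x) = x^m for some integer m ≥ 1 and n = k = 1, in which case both sums equal 1. -/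

import Mathlib

open Finset Polynomial

/-- The multiple reciprocal sum `H_{k,f}(s⃗,n) = ∑_{1 ≤ i₁ < ⋯ < i_k ≤ n} ∏_j 1/f(i_j)^{s_j}`. -/
noncomputable def Hsum (f : Polynomial ℤ) (k n : ℕ) (s : Fin k → ℕ) : ℚ :=
  ∑ i ∈ (Fintype.piFinset fun _ : Fin k => Finset.Icc 1 n).filter
      (fun i => ∀ p q : Fin k, p < q → i p < i q),
    ∏ j : Fin k, (1 : ℚ) / ((f.eval ((i j : ℕ) : ℤ) : ℤ) : ℚ) ^ (s j)

/-- The multiple reciprocal star sum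
`H*_{k,f}(s⃗,n) = ∑_{1 ≤ i₁ ≤ ⋯ ≤ i_k ≤ n} ∏_j 1/f(i_j)^{s_j}`. -/
noncomputable def HsumStar (f : Polynomial ℤ) (k n : ℕ) (s : Fin k → ℕ) : ℚ :=
  ∑ i ∈ (Fintype.piFinset fun _ : Fin k => Finset.Icc 1 n).filter
      (fun i => ∀ p q : Fin k, p ≤ q → i p ≤ i q),
    ∏ j : Fin k, (1 : ℚ) / ((f.eval ((i j : ℕ) : ℤ) : ℤ) : ℚ) ^ (s j)



lemma tele_exact : ∀ (n t : ℕ), 2 ≤ t → t ≤ n + 1 →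
    ∑ u ∈ Finset.Icc t n, (1:ℚ)/(u*(u-1)) = 1/((t:ℚ)-1) - 1/(n:ℚ) := by
  intro n
  induction n with
  | zero => intro t ht h; omega
  | succ n ih =>
    intro t ht h
    rcases Nat.lt_or_ge (n+1) t with h' | h'
    · have : t = n + 2 := by omega
      subst this
      rw [Finset.Icc_eq_empty (by omega)]
      push_cast
      ring_nf
    · rw [Finset.sum_Icc_succ_top (by omega)]
      rw [ih t ht (by omega)]
      have hn1 : 1 ≤ n := by omega
      have hn : (1:ℚ) ≤ (n:ℚ) := by exact_mod_cast hn1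
      have hnn : (0:ℚ) < n := by linarith
      have hnn1 : (0:ℚ) < (n:ℚ) + 1 := by linarith
      have hn0 : (n:ℚ) ≠ 0 := ne_of_gt hnn
      have ht1 : (t:ℚ) - 1 ≠ 0 := by
        have : (2:ℚ) ≤ (t:ℚ) := by exact_mod_cast ht
        linarith
      have hn11 : (n:ℚ) + 1 - 1 ≠ 0 := by simpa using hn0
      push_cast
      field_simp
      ring

lemma tele_le (n t : ℕ) (ht : 2 ≤ t) :
    ∑ u ∈ Finset.Icc t n, (1:ℚ)/(u*(u-1)) ≤ 1/((t:ℚ)-1) := by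
  rcases le_or_gt t (n+1) with h | h
  · rw [tele_exact n t ht h]
    have : (0:ℚ) ≤ 1/(n:ℚ) := by positivity
    linarith
  · rw [Finset.Icc_eq_empty (by omega)]
    have : (1:ℚ) ≤ (t:ℚ) - 1 := by
      have : (2:ℚ) ≤ (t:ℚ) := by exact_mod_cast ht
      linarith
    simp only [Finset.sum_empty]
    positivity

lemma sq_le_tele {u : ℕ} (hu : 2 ≤ u) : (1:ℚ)/(u:ℚ)^2 ≤ 1/(u*(u-1)) := by
  have h2 : (2:ℚ) ≤ (u:ℚ) := by exact_mod_cast hu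
  apply one_div_le_one_div_of_le
  · nlinarith
  · nlinarith

lemma sq_tail (n t : ℕ) (ht : 2 ≤ t) :
    ∑ u ∈ Finset.Icc t n, (1:ℚ)/(u:ℚ)^2 ≤ 1/((t:ℚ)-1) := by
  refine le_trans (Finset.sum_le_sum ?_) (tele_le n t ht)
  intro u hu
  exact sq_le_tele (by exact le_trans ht (Finset.mem_Icc.mp hu).1)

lemma tele2 (n : ℕ) : ∑ i ∈ Finset.Icc 1 n, (1:ℚ)/(i*(i+1)) ≤ 1 - 1/((n:ℚ)+1) := by
  induction n with
  | zero => simp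
  | succ n ih =>
    rw [Finset.sum_Icc_succ_top (by omega)]
    have h1 : (0:ℚ) < (n:ℚ) + 1 := by positivity
    have h2 : (0:ℚ) < (n:ℚ) + 2 := by positivity
    push_cast
    have e : ((n:ℚ)+1+1) = (n:ℚ)+2 := by ring
    rw [e]
    have heq : (1:ℚ)/(((n:ℚ)+1)*((n:ℚ)+2)) = 1/((n:ℚ)+1) - 1/((n:ℚ)+2) := by
      field_simp
      ring
    rw [heq]
    linarith

lemma sum_mono_upper (g : ℕ → ℚ) (hg : ∀ i, 0 ≤ g i) (a n N : ℕ) (h : n ≤ N) :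
    ∑ i ∈ Finset.Icc a n, g i ≤ ∑ i ∈ Finset.Icc a N, g i :=
  Finset.sum_le_sum_of_subset_of_nonneg (Finset.Icc_subset_Icc_right h)
    (fun i _ _ => hg i)

lemma sq_tail5 (M : ℕ) : ∑ u ∈ Finset.Icc 5 M, (1:ℚ)/(u:ℚ)^2 ≤ 1/4 := by
  have h := sq_tail M 5 (by omega)
  have e : ((5:ℕ):ℚ) - 1 = 4 := by norm_num
  rw [e] at h
  exact h

lemma U2 (n : ℕ) : ∑ u ∈ Finset.Icc 2 n, (1:ℚ)/(u:ℚ)^2 ≤ 97/144 := by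
  set M := max n 4 with hM
  have h4 : 4 ≤ M := le_max_right _ _
  refine le_trans (sum_mono_upper _ (by intro i; positivity) 2 n M (le_max_left _ _)) ?_
  have e1 : Finset.Icc 2 M = Finset.Ioc 1 M := (Finset.Icc_add_one_left_eq_Ioc 1 M)
  rw [e1, ← Finset.sum_Ioc_consecutive _ (by omega : 1 ≤ 4) h4]
  have h14 : Finset.Ioc 1 4 = ({2,3,4} : Finset ℕ) := by decide
  have e2 : Finset.Ioc 4 M = Finset.Icc 5 M := (Finset.Icc_add_one_left_eq_Ioc 4 M).symm
  rw [h14, e2]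
  have hhead : ∑ u ∈ ({2,3,4} : Finset ℕ), (1:ℚ)/(u:ℚ)^2 = 1/4 + 1/9 + 1/16 := by
    norm_num [Finset.sum_insert, Finset.mem_insert]
  rw [hhead]
  linarith [sq_tail5 M]

lemma U3 (n : ℕ) : ∑ u ∈ Finset.Icc 3 n, (1:ℚ)/(u:ℚ)^2 ≤ 61/144 := by
  set M := max n 4 with hM
  have h4 : 4 ≤ M := le_max_right _ _
  refine le_trans (sum_mono_upper _ (by intro i; positivity) 3 n M (le_max_left _ _)) ?_
  have e1 : Finset.Icc 3 M = Finset.Ioc 2 M := (Finset.Icc_add_one_left_eq_Ioc 2 M)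
  rw [e1, ← Finset.sum_Ioc_consecutive _ (by omega : 2 ≤ 4) h4]
  have h24 : Finset.Ioc 2 4 = ({3,4} : Finset ℕ) := by decide
  have e2 : Finset.Ioc 4 M = Finset.Icc 5 M := (Finset.Icc_add_one_left_eq_Ioc 4 M).symm
  rw [h24, e2]
  have hhead : ∑ u ∈ ({3,4} : Finset ℕ), (1:ℚ)/(u:ℚ)^2 = 1/9 + 1/16 := by
    norm_num [Finset.sum_insert, Finset.mem_insert]
  rw [hhead]
  linarith [sq_tail5 M]

/-- weakly increasing tuples in [t,n] -/
def wSet (t n k : ℕ) : Finset (Fin k → ℕ) :=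
  (Fintype.piFinset fun _ : Fin k => Finset.Icc t n).filter
      (fun x => ∀ p q : Fin k, p ≤ q → x p ≤ x q)

noncomputable def Aq (y : ℕ → ℚ) (n t k : ℕ) : ℚ := ∑ x ∈ wSet t n k, ∏ j, y (x j)

lemma Aq_zero (y : ℕ → ℚ) (n t : ℕ) : Aq y n t 0 = 1 := by
  unfold Aq wSet
  rw [Finset.filter_true_of_mem (by intro x _ p q h; exact le_of_eq (congrArg x (Subsingleton.elim p q)))]
  have : (Fintype.piFinset fun _ : Fin 0 => Finset.Icc t n) = {default} := by
    ext x
    simp only [Fintype.mem_piFinset, Finset.mem_singleton]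
    constructor
    · intro _; exact Subsingleton.elim _ _
    · intro _ a; exact a.elim0
  rw [this, Finset.sum_singleton]
  simp

lemma cons_mono {k : ℕ} {u : ℕ} {z : Fin k → ℕ} (hz : ∀ i, u ≤ z i)
    (hmono : ∀ p q : Fin k, p ≤ q → z p ≤ z q) :
    ∀ p q : Fin (k+1), p ≤ q → (Fin.cons u z : Fin (k+1) → ℕ) p ≤ (Fin.cons u z : Fin (k+1) → ℕ) q := by
  intro p q hpq
  rcases Fin.eq_zero_or_eq_succ p with rfl | ⟨i, rfl⟩
  · rcases Fin.eq_zero_or_eq_succ q with rfl | ⟨m, rfl⟩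
    · simp
    · simpa using hz m
  · rcases Fin.eq_zero_or_eq_succ q with rfl | ⟨m, rfl⟩
    · exact absurd (le_antisymm hpq (Fin.zero_le _)) (Fin.succ_ne_zero i)
    · simpa using hmono i m (by rwa [Fin.succ_le_succ_iff] at hpq)

lemma Aq_succ (y : ℕ → ℚ) (n t k : ℕ) :
    Aq y n t (k+1) = ∑ u ∈ Finset.Icc t n, y u * Aq y n u k := by
  unfold Aq
  simp only [Finset.mul_sum]
  rw [Finset.sum_sigma' (Finset.Icc t n) (fun u => wSet u n k)
      (fun u x => y u * ∏ j, y (x j))]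
  apply Finset.sum_nbij' (i := fun x => (⟨x 0, Fin.tail x⟩ : Σ u : ℕ, (Fin k → ℕ)))
      (j := fun p => Fin.cons p.1 p.2)
  · -- membership forward
    intro x hx
    simp only [wSet, Finset.mem_filter, Fintype.mem_piFinset] at hx
    obtain ⟨hmem, hmono⟩ := hx
    simp only [Finset.mem_sigma, wSet, Finset.mem_filter, Fintype.mem_piFinset]
    refine ⟨hmem 0, ⟨?_, ?_⟩⟩
    · intro p
      simp only [Fin.tail]
      rw [Finset.mem_Icc]
      have h1 := (Finset.mem_Icc.mp (hmem p.succ)).2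
      have h2 := hmono 0 p.succ (Fin.zero_le _)
      exact ⟨h2, h1⟩
    · intro p q hpq
      exact hmono p.succ q.succ (Fin.succ_le_succ_iff.mpr hpq)
  · -- membership backward
    rintro ⟨u, z⟩ hp
    simp only [Finset.mem_sigma, wSet, Finset.mem_filter, Fintype.mem_piFinset] at hp
    obtain ⟨hu, hz, hzmono⟩ := hp
    rw [Finset.mem_Icc] at hu
    simp only [wSet, Finset.mem_filter, Fintype.mem_piFinset]
    have hzlow : ∀ i, u ≤ z i := fun i => (Finset.mem_Icc.mp (hz i)).1
    constructor
    · intro p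
      refine Fin.cases ?_ ?_ p
      · simpa using hu
      · intro i
        simp only [Fin.cons_succ]
        have := Finset.mem_Icc.mp (hz i)
        rw [Finset.mem_Icc]
        omega
    · exact cons_mono hzlow hzmono
  · intro x _
    exact Fin.cons_self_tail x
  · rintro ⟨u, z⟩ _
    simp [Fin.tail_cons]
  · intro x _
    rw [Fin.prod_univ_succ]
    rfl

lemma Aq_nonneg (y : ℕ → ℚ) (hy : ∀ u, 0 ≤ y u) (n t k : ℕ) : 0 ≤ Aq y n t k := by
  apply Finset.sum_nonneg
  intro x _
  exact Finset.prod_nonneg (fun j _ => hy _)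
section AqBounds
variable (y : ℕ → ℚ) (n : ℕ)

lemma Aq_decay (hy0 : ∀ u, 0 ≤ y u) (hy2 : ∀ u, 2 ≤ u → y u = 1/(u:ℚ)^2) :
    ∀ k t, 2 ≤ t → Aq y n t k ≤ (1/2)^k * ((t:ℚ)/((t:ℚ)-1)) := by
  intro k
  induction k with
  | zero =>
    intro t ht
    rw [Aq_zero, pow_zero, one_mul]
    have h2 : (2:ℚ) ≤ t := by exact_mod_cast ht
    rw [le_div_iff₀ (by linarith)]
    linarith
  | succ k ih =>
    intro t ht
    rw [Aq_succ]
    have h2 : (2:ℚ) ≤ (t:ℚ) := by exact_mod_cast ht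
    have step : ∀ u ∈ Finset.Icc t n, y u * Aq y n u k ≤ (1/2)^k * (1/((u:ℚ)*((u:ℚ)-1))) := by
      intro u hu
      have hu2 : 2 ≤ u := le_trans ht (Finset.mem_Icc.mp hu).1
      have hq2 : (2:ℚ) ≤ (u:ℚ) := by exact_mod_cast hu2
      have e : y u = 1/(u:ℚ)^2 := hy2 u hu2
      have h1 : y u * Aq y n u k ≤ (1/(u:ℚ)^2) * ((1/2)^k * ((u:ℚ)/((u:ℚ)-1))) := by
        rw [e]
        exact mul_le_mul_of_nonneg_left (ih u hu2) (by positivity)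
      refine le_trans h1 (le_of_eq ?_)
      have hu0 : (u:ℚ) ≠ 0 := by linarith
      have hu1 : (u:ℚ) - 1 ≠ 0 := by intro h; nlinarith [h]
      field_simp
    refine le_trans (Finset.sum_le_sum step) ?_
    rw [← Finset.mul_sum]
    have htele := tele_le n t ht
    have hpow : (0:ℚ) ≤ (1/2)^k := by positivity
    refine le_trans (mul_le_mul_of_nonneg_left htele hpow) ?_
    rw [pow_succ]
    have ht1 : (0:ℚ) < (t:ℚ) - 1 := by linarith
    rw [mul_assoc]
    refine mul_le_mul_of_nonneg_left ?_ hpow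
    rw [div_le_iff₀ ht1, mul_comm ((1:ℚ)/2) _, mul_assoc]
    rw [div_mul_eq_mul_div, div_mul_eq_mul_div, le_div_iff₀ ht1]
    nlinarith

lemma Aq_partial (hy0 : ∀ u, 0 ≤ y u) (hy2 : ∀ u, 2 ≤ u → y u = 1/(u:ℚ)^2) :
    ∀ j t, 2 ≤ t → t ≤ n + 1 →
      ∑ m ∈ Finset.range (j+1), Aq y n t m ≤ (t:ℚ)*(n:ℚ)/(((t:ℚ)-1)*((n:ℚ)+1)) := by
  intro j
  induction j with
  | zero =>
    intro t ht htn
    have h2 : (2:ℚ) ≤ (t:ℚ) := by exact_mod_cast ht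
    have hn1 : 1 ≤ n := by omega
    have hnq : (1:ℚ) ≤ (n:ℚ) := by exact_mod_cast hn1
    have htn' : (t:ℚ) ≤ (n:ℚ) + 1 := by exact_mod_cast htn
    simp only [zero_add, Finset.range_one, Finset.sum_singleton, Aq_zero]
    rw [le_div_iff₀ (by nlinarith)]
    nlinarith
  | succ j ih =>
    intro t ht htn
    have h2 : (2:ℚ) ≤ (t:ℚ) := by exact_mod_cast ht
    have hn1 : 1 ≤ n := by omega
    have hnq : (1:ℚ) ≤ (n:ℚ) := by exact_mod_cast hn1
    rw [Finset.sum_range_succ']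
    simp only [Aq_succ, Aq_zero]
    rw [Finset.sum_comm]
    have inner : ∀ u ∈ Finset.Icc t n,
        ∑ m ∈ Finset.range (j+1), y u * Aq y n u m ≤ ((n:ℚ)/((n:ℚ)+1)) * (1/((u:ℚ)*((u:ℚ)-1))) := by
      intro u hu
      obtain ⟨hu1, hu2⟩ := Finset.mem_Icc.mp hu
      have hu2' : 2 ≤ u := le_trans ht hu1
      have huq : (2:ℚ) ≤ (u:ℚ) := by exact_mod_cast hu2'
      rw [← Finset.mul_sum]
      have hAq := ih u hu2' (by omega)
      have e : y u = 1/(u:ℚ)^2 := hy2 u hu2'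
      have h1 : y u * (∑ m ∈ Finset.range (j+1), Aq y n u m)
          ≤ (1/(u:ℚ)^2) * ((u:ℚ)*(n:ℚ)/(((u:ℚ)-1)*((n:ℚ)+1))) := by
        rw [e]
        refine mul_le_mul_of_nonneg_left hAq (by positivity)
      refine le_trans h1 (le_of_eq ?_)
      have hu0 : (u:ℚ) ≠ 0 := by linarith
      have hu1' : (u:ℚ) - 1 ≠ 0 := by intro h; nlinarith [h]
      have hn0 : (n:ℚ) + 1 ≠ 0 := by positivity
      field_simp
    refine le_trans (add_le_add_left (Finset.sum_le_sum inner) 1) ?_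
    rw [← Finset.mul_sum, tele_exact n t ht htn]
    have hn0 : (0:ℚ) < (n:ℚ) := by linarith
    have ht1 : (0:ℚ) < (t:ℚ) - 1 := by linarith
    have key : (n:ℚ)/((n:ℚ)+1) * (1/((t:ℚ)-1) - 1/(n:ℚ)) + 1
        = (t:ℚ)*(n:ℚ)/(((t:ℚ)-1)*((n:ℚ)+1)) := by
      field_simp
      ring
    rw [key]

lemma Aq_head (k : ℕ) (hn : 1 ≤ n) :
    Aq y n 1 (k+1) = y 1 * Aq y n 1 k + ∑ u ∈ Finset.Icc 2 n, y u * Aq y n u k := by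
  rw [Aq_succ]
  have h : Finset.Icc 1 n = insert 1 (Finset.Icc 2 n) := by
    ext x; simp only [Finset.mem_Icc, Finset.mem_insert]; omega
  rw [h, Finset.sum_insert (by simp)]

lemma C1up (hy0 : ∀ u, 0 ≤ y u) (hy2 : ∀ u, 2 ≤ u → y u = 1/(u:ℚ)^2)
    (hy1 : y 1 ≤ 1) (hn : 1 ≤ n) (k : ℕ) :
    Aq y n 1 k ≤ 1 + ((n:ℚ)-1)/((n:ℚ)+1) := by
  have hnq : (1:ℚ) ≤ (n:ℚ) := by exact_mod_cast hn
  have main : ∀ k, Aq y n 1 k ≤ 1 + ∑ u ∈ Finset.Icc 2 n, y u * (∑ m ∈ Finset.range k, Aq y n u m) := by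
    intro k
    induction k with
    | zero =>
      rw [Aq_zero]
      simp only [Finset.range_zero, Finset.sum_empty, mul_zero, Finset.sum_const_zero, add_zero]
      exact le_refl 1
    | succ k ih =>
      rw [Aq_head y n k hn]
      have h1 : y 1 * Aq y n 1 k ≤ Aq y n 1 k :=
        mul_le_of_le_one_left (Aq_nonneg y hy0 n 1 k) hy1
      have h2 : Aq y n 1 k + ∑ u ∈ Finset.Icc 2 n, y u * Aq y n u k
          ≤ (1 + ∑ u ∈ Finset.Icc 2 n, y u * (∑ m ∈ Finset.range k, Aq y n u m))
            + ∑ u ∈ Finset.Icc 2 n, y u * Aq y n u k := by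
        exact add_le_add_left ih _
      refine le_trans (add_le_add_left h1 _) (le_trans h2 (le_of_eq ?_))
      rw [add_assoc, ← Finset.sum_add_distrib]
      congr 1
      apply Finset.sum_congr rfl
      intro u _
      rw [Finset.sum_range_succ, mul_add]
  rcases Nat.eq_zero_or_pos k with rfl | hk
  · rw [Aq_zero]
    have : (0:ℚ) ≤ ((n:ℚ)-1)/((n:ℚ)+1) := by
      apply div_nonneg <;> linarith
    linarith
  · obtain ⟨j, rfl⟩ : ∃ j, k = j + 1 := ⟨k - 1, by omega⟩
    refine le_trans (main (j+1)) ?_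
    have hbound : ∑ u ∈ Finset.Icc 2 n, y u * (∑ m ∈ Finset.range (j+1), Aq y n u m)
        ≤ ((n:ℚ)-1)/((n:ℚ)+1) := by
      have inner : ∀ u ∈ Finset.Icc 2 n,
          y u * (∑ m ∈ Finset.range (j+1), Aq y n u m)
            ≤ ((n:ℚ)/((n:ℚ)+1)) * (1/((u:ℚ)*((u:ℚ)-1))) := by
        intro u hu
        obtain ⟨hu1, hu2⟩ := Finset.mem_Icc.mp hu
        have huq : (2:ℚ) ≤ (u:ℚ) := by exact_mod_cast hu1
        have hAq := Aq_partial y n hy0 hy2 j u hu1 (by omega)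
        have e : y u = 1/(u:ℚ)^2 := hy2 u hu1
        have h1 : y u * (∑ m ∈ Finset.range (j+1), Aq y n u m)
            ≤ (1/(u:ℚ)^2) * ((u:ℚ)*(n:ℚ)/(((u:ℚ)-1)*((n:ℚ)+1))) := by
          rw [e]
          refine mul_le_mul_of_nonneg_left hAq (by positivity)
        refine le_trans h1 (le_of_eq ?_)
        have hu0 : (u:ℚ) ≠ 0 := by linarith
        have hu1' : (u:ℚ) - 1 ≠ 0 := by intro h; nlinarith [h]
        have hn0 : (n:ℚ) + 1 ≠ 0 := by positivity
        field_simp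
      refine le_trans (Finset.sum_le_sum inner) ?_
      rw [← Finset.mul_sum, tele_exact n 2 (le_refl 2) (by omega)]
      have hn0 : (0:ℚ) < (n:ℚ) := by linarith
      have e2 : (((2:ℕ):ℚ)-1) = 1 := by norm_num
      rw [e2]
      have hn0' : (n:ℚ) ≠ 0 := by linarith
      have hn1' : (n:ℚ) + 1 ≠ 0 := by positivity
      have key : (n:ℚ)/((n:ℚ)+1) * (1/1 - 1/(n:ℚ)) = ((n:ℚ)-1)/((n:ℚ)+1) := by
        field_simp
      rw [key]
    linarith
end AqBounds
lemma C2up (y : ℕ → ℚ) (n : ℕ) (hy0 : ∀ u, 0 ≤ y u) (hy2 : ∀ u, 2 ≤ u → y u = 1/(u:ℚ)^2)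
    (hy1 : y 1 = 1/2) (hn : 1 ≤ n) :
    ∀ k, Aq y n 1 k ≤ (2*(k:ℚ)+1)/2^k := by
  intro k
  induction k with
  | zero => rw [Aq_zero]; norm_num
  | succ k ih =>
    rw [Aq_head y n k hn, hy1]
    have hD : ∑ u ∈ Finset.Icc 2 n, y u * Aq y n u k ≤ (1/2)^k := by
      have inner : ∀ u ∈ Finset.Icc 2 n,
          y u * Aq y n u k ≤ (1/2)^k * (1/((u:ℚ)*((u:ℚ)-1))) := by
        intro u hu
        obtain ⟨hu1, hu2⟩ := Finset.mem_Icc.mp hu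
        have huq : (2:ℚ) ≤ (u:ℚ) := by exact_mod_cast hu1
        have e : y u = 1/(u:ℚ)^2 := hy2 u hu1
        have h1 : y u * Aq y n u k ≤ (1/(u:ℚ)^2) * ((1/2)^k * ((u:ℚ)/((u:ℚ)-1))) := by
          rw [e]
          exact mul_le_mul_of_nonneg_left (Aq_decay y n hy0 hy2 k u hu1) (by positivity)
        refine le_trans h1 (le_of_eq ?_)
        have hu0 : (u:ℚ) ≠ 0 := by linarith
        have hu1' : (u:ℚ) - 1 ≠ 0 := by intro h; nlinarith [h]
        field_simp
      refine le_trans (Finset.sum_le_sum inner) ?_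
      rw [← Finset.mul_sum]
      have htele := tele_le n 2 (le_refl 2)
      have e2 : (((2:ℕ):ℚ)-1) = 1 := by norm_num
      rw [e2] at htele
      have hpow : (0:ℚ) ≤ (1/2)^k := by positivity
      calc (1/2:ℚ)^k * ∑ u ∈ Finset.Icc 2 n, 1/((u:ℚ)*((u:ℚ)-1))
          ≤ (1/2)^k * (1/1) := mul_le_mul_of_nonneg_left htele hpow
        _ = (1/2)^k := by norm_num
    have h1 : (1/2:ℚ) * Aq y n 1 k ≤ (1/2) * ((2*(k:ℚ)+1)/2^k) :=
      mul_le_mul_of_nonneg_left ih (by norm_num)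
    have hpos : (0:ℚ) < 2^k := by positivity
    calc (1/2:ℚ) * Aq y n 1 k + ∑ u ∈ Finset.Icc 2 n, y u * Aq y n u k
        ≤ (1/2) * ((2*(k:ℚ)+1)/2^k) + (1/2)^k := add_le_add h1 hD
      _ = (2*((k:ℚ)+1)+1)/2^(k+1) := by
          rw [one_div, inv_pow, pow_succ]
          field_simp
          ring
      _ = (2*(((k+1):ℕ):ℚ)+1)/2^(k+1) := by push_cast; ring_nf

lemma quartic_cubic (n : ℕ) :
    ∑ u ∈ Finset.Icc 2 n, ((1:ℚ)/(u:ℚ)^4 + 1/(u:ℚ)^3) ≤ 3/16 + 4/81 + 1/6 := by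
  set M := max n 3 with hM
  have h3 : 3 ≤ M := le_max_right _ _
  refine le_trans (sum_mono_upper _ (by intro i; positivity) 2 n M (le_max_left _ _)) ?_
  have e1 : Finset.Icc 2 M = Finset.Ioc 1 M := (Finset.Icc_add_one_left_eq_Ioc 1 M)
  rw [e1, ← Finset.sum_Ioc_consecutive _ (by omega : 1 ≤ 3) h3]
  have h13 : Finset.Ioc 1 3 = ({2,3} : Finset ℕ) := by decide
  have e2 : Finset.Ioc 3 M = Finset.Icc 4 M := (Finset.Icc_add_one_left_eq_Ioc 3 M).symm
  rw [h13, e2]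
  have hhead : ∑ u ∈ ({2,3} : Finset ℕ), ((1:ℚ)/(u:ℚ)^4 + 1/(u:ℚ)^3) = 3/16 + 4/81 := by
    norm_num [Finset.sum_insert, Finset.mem_insert]
  rw [hhead]
  have htail : ∑ u ∈ Finset.Icc 4 M, ((1:ℚ)/(u:ℚ)^4 + 1/(u:ℚ)^3) ≤ 1/6 := by
    have inner : ∀ u ∈ Finset.Icc 4 M, ((1:ℚ)/(u:ℚ)^4 + 1/(u:ℚ)^3)
        ≤ (1/2) * (1/((u:ℚ)*((u:ℚ)-1))) := by
      intro u hu
      obtain ⟨hu1, _⟩ := Finset.mem_Icc.mp hu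
      have huq : (4:ℚ) ≤ (u:ℚ) := by exact_mod_cast hu1
      have hprod : (0:ℚ) < (u:ℚ)*((u:ℚ)-1) := by nlinarith
      have h1 : (1:ℚ)/(u:ℚ)^4 ≤ (1/4) * (1/((u:ℚ)*((u:ℚ)-1))) := by
        rw [mul_one_div, div_le_div_iff₀ (by positivity) hprod]
        have s1 : (16:ℚ) ≤ (u:ℚ)^2 := by nlinarith
        nlinarith [s1, sq_nonneg (u:ℚ)]
      have h2 : (1:ℚ)/(u:ℚ)^3 ≤ (1/4) * (1/((u:ℚ)*((u:ℚ)-1))) := by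
        rw [mul_one_div, div_le_div_iff₀ (by positivity) hprod]
        nlinarith [sq_nonneg ((u:ℚ)-2)]
      linarith
    refine le_trans (Finset.sum_le_sum inner) ?_
    rw [← Finset.mul_sum]
    have htele := tele_le M 4 (by omega)
    have e4 : (((4:ℕ):ℚ)-1) = 3 := by norm_num
    rw [e4] at htele
    calc (1/2:ℚ) * ∑ u ∈ Finset.Icc 4 M, 1/((u:ℚ)*((u:ℚ)-1))
        ≤ (1/2) * (1/3) := mul_le_mul_of_nonneg_left htele (by norm_num)
      _ = 1/6 := by norm_num
  linarith

lemma C2two (y : ℕ → ℚ) (n : ℕ) (hy0 : ∀ u, 0 ≤ y u) (hy2 : ∀ u, 2 ≤ u → y u = 1/(u:ℚ)^2)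
    (hy1 : y 1 = 1/2) (hn : 1 ≤ n) :
    Aq y n 1 2 ≤ 2567/2592 := by
  rw [Aq_head y n 1 hn, hy1]
  have hA11 : Aq y n 1 1 ≤ 1/2 + 97/144 := by
    rw [Aq_head y n 0 hn, hy1, Aq_zero, mul_one]
    have : ∑ u ∈ Finset.Icc 2 n, y u * Aq y n u 0 ≤ 97/144 := by
      refine le_trans (le_of_eq (Finset.sum_congr rfl ?_)) (U2 n)
      intro u hu
      obtain ⟨hu1, _⟩ := Finset.mem_Icc.mp hu
      rw [Aq_zero, mul_one, hy2 u hu1]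
    linarith
  have hrest : ∑ u ∈ Finset.Icc 2 n, y u * Aq y n u 1
      ≤ 3/16 + 4/81 + 1/6 := by
    have inner : ∀ u ∈ Finset.Icc 2 n, y u * Aq y n u 1 ≤ (1:ℚ)/(u:ℚ)^4 + 1/(u:ℚ)^3 := by
      intro u hu
      obtain ⟨hu1, hu2⟩ := Finset.mem_Icc.mp hu
      have huq : (2:ℚ) ≤ (u:ℚ) := by exact_mod_cast hu1
      have hA1 : Aq y n u 1 ≤ 1/(u:ℚ)^2 + 1/(u:ℚ) := by
        rw [Aq_succ]
        have hsplit : Finset.Icc u n = insert u (Finset.Icc (u+1) n) := by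
          ext x; simp only [Finset.mem_Icc, Finset.mem_insert]; omega
        rw [hsplit, Finset.sum_insert (by simp)]
        simp only [Aq_zero, mul_one]
        have htail : ∑ v ∈ Finset.Icc (u+1) n, y v ≤ 1/(u:ℚ) := by
          have e : ∀ v ∈ Finset.Icc (u+1) n, y v = 1/(v:ℚ)^2 := by
            intro v hv
            exact hy2 v (by have := (Finset.mem_Icc.mp hv).1; omega)
          rw [Finset.sum_congr rfl e]
          have := sq_tail n (u+1) (by omega)
          have e2 : ((u+1:ℕ):ℚ) - 1 = (u:ℚ) := by push_cast; ring
          rwa [e2] at this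
        rw [hy2 u hu1]
        linarith
      rw [hy2 u hu1]
      have h1 : y u ≥ 0 := hy0 u  -- unused
      calc (1/(u:ℚ)^2) * Aq y n u 1 ≤ (1/(u:ℚ)^2) * (1/(u:ℚ)^2 + 1/(u:ℚ)) :=
            mul_le_mul_of_nonneg_left hA1 (by positivity)
        _ = 1/(u:ℚ)^4 + 1/(u:ℚ)^3 := by
            have hu0 : (u:ℚ) ≠ 0 := by linarith
            field_simp
    exact le_trans (Finset.sum_le_sum inner) (quartic_cubic n)
  have : (1/2:ℚ) * Aq y n 1 1 ≤ (1/2) * (1/2 + 97/144) :=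
    mul_le_mul_of_nonneg_left hA11 (by norm_num)
  linarith

lemma nat_two_pow (k : ℕ) (hk : 3 ≤ k) : 2*k+1 < 2^k := by
  induction k with
  | zero => omega
  | succ k ih =>
    rcases Nat.lt_or_ge k 3 with h | h
    · interval_cases k <;> simp_all <;> omega
    · have := ih (by omega)
      have : 2^k ≥ 8 := by
        calc 2^k ≥ 2^3 := Nat.pow_le_pow_right (by omega) h
        _ = 8 := by norm_num
      rw [pow_succ]
      omega

lemma q_two_pow (k : ℕ) (hk : 3 ≤ k) : (2*(k:ℚ)+1)/2^k < 1 := by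
  have h := nat_two_pow k hk
  have h2 : (2*(k:ℚ)+1) < 2^k := by exact_mod_cast h
  rw [div_lt_one (by positivity)]
  exact h2
section Poly
variable {f : Polynomial ℤ}

lemma lead_pos (hf0 : f ≠ 0) (hcoeff : ∀ i, 0 ≤ f.coeff i) :
    1 ≤ f.coeff f.natDegree := by
  have h := Polynomial.leadingCoeff_ne_zero.mpr hf0
  rw [Polynomial.leadingCoeff] at h
  have := hcoeff f.natDegree
  omega

lemma P1 (hf0 : f ≠ 0) (hcoeff : ∀ i, 0 ≤ f.coeff i) (i : ℤ) (hi : 1 ≤ i) :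
    i ^ f.natDegree ≤ f.eval i := by
  rw [Polynomial.eval_eq_sum_range, Finset.sum_range_succ]
  have h1 : (0:ℤ) ≤ ∑ j ∈ Finset.range f.natDegree, f.coeff j * i ^ j :=
    Finset.sum_nonneg fun j _ => mul_nonneg (hcoeff j) (pow_nonneg (by linarith) j)
  have h2 : i ^ f.natDegree ≤ f.coeff f.natDegree * i ^ f.natDegree :=
    le_mul_of_one_le_left (pow_nonneg (by linarith) _) (lead_pos hf0 hcoeff)
  linarith

lemma P2 (hf0 : f ≠ 0) (hcoeff : ∀ i, 0 ≤ f.coeff i) (i : ℤ) (hi : 1 ≤ i) :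
    f.eval 1 + (i ^ f.natDegree - 1) ≤ f.eval i := by
  rw [Polynomial.eval_eq_sum_range (x := i), Polynomial.eval_eq_sum_range (x := 1),
    Finset.sum_range_succ, Finset.sum_range_succ]
  have hterm : ∑ j ∈ Finset.range f.natDegree, f.coeff j * 1 ^ j
      ≤ ∑ j ∈ Finset.range f.natDegree, f.coeff j * i ^ j := by
    apply Finset.sum_le_sum
    intro j _
    have h1j : (1:ℤ)^j ≤ i^j := pow_le_pow_left₀ (by norm_num) hi j
    exact mul_le_mul_of_nonneg_left h1j (hcoeff j)
  have hc : 1 ≤ f.coeff f.natDegree := lead_pos hf0 hcoeff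
  have hp : 1 ≤ i ^ f.natDegree := by
    have := pow_le_pow_left₀ (by norm_num : (0:ℤ) ≤ 1) hi f.natDegree
    rwa [one_pow] at this
  have hlast : f.coeff f.natDegree * 1 ^ f.natDegree + (i ^ f.natDegree - 1)
      ≤ f.coeff f.natDegree * i ^ f.natDegree := by
    rw [one_pow, mul_one]
    nlinarith [hc, hp]
  linarith [hterm, hlast]

lemma eval1_pos (hf0 : f ≠ 0) (hcoeff : ∀ i, 0 ≤ f.coeff i) : 1 ≤ f.eval 1 := by
  have := P1 hf0 hcoeff 1 (le_refl 1)
  simpa using this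

lemma P3 (hf0 : f ≠ 0) (hcoeff : ∀ i, 0 ≤ f.coeff i) (h1 : f.eval 1 = 1) :
    f = Polynomial.X ^ f.natDegree := by
  have he := Polynomial.eval_eq_sum_range (p := f) (1:ℤ)
  simp only [one_pow, mul_one] at he
  rw [h1, Finset.sum_range_succ] at he
  have hd := lead_pos hf0 hcoeff
  have hnn : (0:ℤ) ≤ ∑ j ∈ Finset.range f.natDegree, f.coeff j :=
    Finset.sum_nonneg fun j _ => hcoeff j
  have hsum0 : ∑ j ∈ Finset.range f.natDegree, f.coeff j = 0 := by omega
  have hlow : ∀ j ∈ Finset.range f.natDegree, f.coeff j = 0 :=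
    (Finset.sum_eq_zero_iff_of_nonneg (fun j _ => hcoeff j)).mp hsum0
  have hcd : f.coeff f.natDegree = 1 := by omega
  apply Polynomial.ext
  intro j
  rw [Polynomial.coeff_X_pow]
  rcases lt_trichotomy j f.natDegree with h | h | h
  · rw [hlow j (Finset.mem_range.mpr h), if_neg (by omega)]
  · rw [if_pos h, h, hcd]
  · rw [Polynomial.coeff_eq_zero_of_natDegree_lt h, if_neg (by omega)]

lemma P4 (hf0 : f ≠ 0) (hcoeff : ∀ i, 0 ≤ f.coeff i) (hd : f.natDegree = 2)
    (h2 : f.eval 1 = 2) :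
    (∀ i : ℤ, 1 ≤ i → i^2 + i ≤ f.eval i) ∨ (∀ i : ℤ, 1 ≤ i → 2*i^2 ≤ f.eval i)
      ∨ (∀ i : ℤ, f.eval i = i^2 + 1) := by
  have evalx : ∀ x : ℤ, f.eval x = f.coeff 0 + f.coeff 1 * x + f.coeff 2 * x^2 := by
    intro x
    rw [Polynomial.eval_eq_sum_range, hd]
    rw [Finset.sum_range_succ, Finset.sum_range_succ, Finset.sum_range_succ,
      Finset.sum_range_zero]
    ring
  have hc2 : 1 ≤ f.coeff 2 := by have := lead_pos hf0 hcoeff; rwa [hd] at this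
  have hsum : f.coeff 0 + f.coeff 1 + f.coeff 2 = 2 := by
    have := evalx 1
    rw [h2] at this
    nlinarith [this]
  have hc0 := hcoeff 0
  have hc1 := hcoeff 1
  by_cases h1 : 1 ≤ f.coeff 1
  · left
    intro i hi
    rw [evalx]
    nlinarith
  · have hc1' : f.coeff 1 = 0 := by omega
    by_cases hq : f.coeff 2 = 2
    · right; left
      intro i hi
      rw [evalx, hq, hc1']
      nlinarith
    · have hc2' : f.coeff 2 = 1 := by omega
      have hc0' : f.coeff 0 = 1 := by omega
      right; right
      intro i
      rw [evalx, hc0', hc1', hc2']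
      ring
end Poly

lemma Eone {f : Polynomial ℤ} (hf0 : f ≠ 0) (hcoeff : ∀ i, 0 ≤ f.coeff i)
    (i : ℕ) (hi : 1 ≤ i) : (1:ℚ) ≤ ((f.eval (i:ℤ) : ℤ) : ℚ) := by
  have h := P1 hf0 hcoeff (i:ℤ) (by exact_mod_cast hi)
  have hz : (1:ℤ) ≤ (i:ℤ) := by exact_mod_cast hi
  have h2 : (1:ℤ) ≤ (i:ℤ)^f.natDegree := by
    have := pow_le_pow_left₀ (by norm_num : (0:ℤ) ≤ 1) hz f.natDegree
    rwa [one_pow] at this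
  exact_mod_cast le_trans h2 h

lemma fac_nonneg {f : Polynomial ℤ} (hf0 : f ≠ 0) (hcoeff : ∀ i, 0 ≤ f.coeff i)
    (i : ℕ) (hi : 1 ≤ i) (m : ℕ) :
    (0:ℚ) ≤ 1 / ((f.eval (i:ℤ) : ℤ) : ℚ) ^ m := by
  have := Eone hf0 hcoeff i hi
  positivity

lemma fac_pos {f : Polynomial ℤ} (hf0 : f ≠ 0) (hcoeff : ∀ i, 0 ≤ f.coeff i)
    (i : ℕ) (hi : 1 ≤ i) (m : ℕ) :
    (0:ℚ) < 1 / ((f.eval (i:ℤ) : ℤ) : ℚ) ^ m := by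
  have := Eone hf0 hcoeff i hi
  positivity

lemma fac_le_sq {f : Polynomial ℤ} (hf0 : f ≠ 0) (hcoeff : ∀ i, 0 ≤ f.coeff i)
    {m : ℕ} (hds : 2 ≤ f.natDegree * m) (i : ℕ) (hi : 1 ≤ i) :
    (1:ℚ) / ((f.eval (i:ℤ) : ℤ) : ℚ) ^ m ≤ 1/(i:ℚ)^2 := by
  have hiq : (1:ℚ) ≤ (i:ℚ) := by exact_mod_cast hi
  have hE : ((i:ℚ))^f.natDegree ≤ ((f.eval (i:ℤ) : ℤ) : ℚ) := by
    have := P1 hf0 hcoeff (i:ℤ) (by exact_mod_cast hi)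
    exact_mod_cast this
  have h1 : ((i:ℚ))^(f.natDegree * m) ≤ ((f.eval (i:ℤ) : ℤ) : ℚ)^m := by
    rw [pow_mul]
    exact pow_le_pow_left₀ (by positivity) hE m
  have h2 : (i:ℚ)^2 ≤ (i:ℚ)^(f.natDegree * m) := pow_le_pow_right₀ hiq hds
  exact one_div_le_one_div_of_le (by positivity) (le_trans h2 h1)

lemma fac_le_half {f : Polynomial ℤ} (hf0 : f ≠ 0) (hcoeff : ∀ i, 0 ≤ f.coeff i)
    (h2 : 2 ≤ f.eval 1) {m : ℕ} (hm : 1 ≤ m) :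
    (1:ℚ) / ((f.eval ((1:ℕ):ℤ) : ℤ) : ℚ) ^ m ≤ 1/2 := by
  have hq : (2:ℚ) ≤ ((f.eval ((1:ℕ):ℤ) : ℤ) : ℚ) := by
    push_cast
    exact_mod_cast h2
  have h1 : (2:ℚ) ≤ ((f.eval ((1:ℕ):ℤ) : ℤ) : ℚ) ^ m := by
    calc (2:ℚ) = 2^1 := by norm_num
    _ ≤ ((f.eval ((1:ℕ):ℤ) : ℤ) : ℚ)^1 := by rw [pow_one, pow_one]; exact hq
    _ ≤ ((f.eval ((1:ℕ):ℤ) : ℤ) : ℚ)^m := pow_le_pow_right₀ (by linarith) hm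
  exact one_div_le_one_div_of_le (by norm_num) h1

lemma Hsum_k1 (f : Polynomial ℤ) (n : ℕ) (s : Fin 1 → ℕ) :
    Hsum f 1 n s = ∑ i ∈ Finset.Icc 1 n, (1:ℚ) / ((f.eval (i:ℤ) : ℤ) : ℚ) ^ (s 0) := by
  unfold Hsum
  rw [Finset.filter_true_of_mem]
  · apply Finset.sum_nbij' (i := fun x => x 0) (j := fun u => fun _ => u)
    · intro x hx; exact (Fintype.mem_piFinset.mp hx) 0
    · intro u hu; exact Fintype.mem_piFinset.mpr (fun _ => hu)
    · intro x _; funext p; rw [Subsingleton.elim p 0]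
    · intro u _; rfl
    · intro x _; rw [Fin.prod_univ_one]
  · intro x _ p q h
    exact absurd h (by rw [Subsingleton.elim p q]; exact lt_irrefl q)

lemma HsumStar_k1 (f : Polynomial ℤ) (n : ℕ) (s : Fin 1 → ℕ) :
    HsumStar f 1 n s = ∑ i ∈ Finset.Icc 1 n, (1:ℚ) / ((f.eval (i:ℤ) : ℤ) : ℚ) ^ (s 0) := by
  unfold HsumStar
  rw [Finset.filter_true_of_mem]
  · apply Finset.sum_nbij' (i := fun x => x 0) (j := fun u => fun _ => u)
    · intro x hx; exact (Fintype.mem_piFinset.mp hx) 0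
    · intro u hu; exact Fintype.mem_piFinset.mpr (fun _ => hu)
    · intro x _; funext p; rw [Subsingleton.elim p 0]
    · intro u _; rfl
    · intro x _; rw [Fin.prod_univ_one]
  · intro x _ p q h
    exact le_of_eq (congrArg x (Subsingleton.elim p q))

lemma star_le_Aq (f : Polynomial ℤ) (hf0 : f ≠ 0) (hcoeff : ∀ i, 0 ≤ f.coeff i)
    (k n : ℕ) (s : Fin k → ℕ) (y : ℕ → ℚ)
    (hterm : ∀ i, 1 ≤ i → i ≤ n → ∀ j : Fin k,
      (1:ℚ) / ((f.eval (i:ℤ) : ℤ) : ℚ) ^ (s j) ≤ y i) :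
    HsumStar f k n s ≤ Aq y n 1 k := by
  unfold HsumStar Aq wSet
  apply Finset.sum_le_sum
  intro x hx
  have hmem := Fintype.mem_piFinset.mp (Finset.mem_filter.mp hx).1
  apply Finset.prod_le_prod
  · intro j _
    exact fac_nonneg hf0 hcoeff (x j) (Finset.mem_Icc.mp (hmem j)).1 (s j)
  · intro j _
    obtain ⟨h1, h2⟩ := Finset.mem_Icc.mp (hmem j)
    exact hterm (x j) h1 h2 j
lemma strict_ge {k : ℕ} (x : Fin (k+1) → ℕ) (hx : ∀ p q : Fin (k+1), p < q → x p < x q) :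
    ∀ m (h : m < k+1), x 0 + m ≤ x ⟨m, h⟩ := by
  intro m
  induction m with
  | zero => intro h; simp
  | succ m ih =>
    intro h
    have hm : m < k+1 := by omega
    have h1 := ih hm
    have h2 := hx ⟨m, hm⟩ ⟨m+1, h⟩ (by simp [Fin.lt_def])
    omega

lemma prod_tail_le_one (n : ℕ) (k : ℕ) (a : Fin k → ℕ) (ha : ∀ p, 2 ≤ a p) :
    ∏ p, (∑ i ∈ Finset.Icc (a p) n, (1:ℚ)/(i:ℚ)^2) ≤ 1 := by
  apply Finset.prod_le_one
  · intro p _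
    apply Finset.sum_nonneg; intro i _; positivity
  · intro p _
    refine le_trans (sq_tail n (a p) (ha p)) ?_
    have h2 : (2:ℚ) ≤ ((a p : ℕ) : ℚ) := by exact_mod_cast ha p
    rw [div_le_one (by linarith)]
    linarith

lemma sumsq_nonneg (n a : ℕ) : (0:ℚ) ≤ ∑ i ∈ Finset.Icc a n, (1:ℚ)/(i:ℚ)^2 := by
  apply Finset.sum_nonneg; intro i _; positivity

lemma prod_box1 (n : ℕ) (k2 : ℕ) :
    ∏ q : Fin (k2+1), (∑ i ∈ Finset.Icc (q.val+2) n, (1:ℚ)/(i:ℚ)^2) ≤ 97/144 := by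
  rw [Fin.prod_univ_succ]
  have h0 : (∑ i ∈ Finset.Icc ((0 : Fin (k2+1)).val+2) n, (1:ℚ)/(i:ℚ)^2) ≤ 97/144 := by
    simp only [Fin.val_zero, Nat.zero_add]
    exact U2 n
  have h1 : ∏ r : Fin k2, (∑ i ∈ Finset.Icc ((r.succ).val+2) n, (1:ℚ)/(i:ℚ)^2) ≤ 1 :=
    prod_tail_le_one n k2 (fun r => (r.succ).val+2) (fun r => Nat.le_add_left 2 _)
  calc (∑ i ∈ Finset.Icc ((0 : Fin (k2+1)).val+2) n, (1:ℚ)/(i:ℚ)^2) *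
        ∏ r : Fin k2, (∑ i ∈ Finset.Icc ((r.succ).val+2) n, (1:ℚ)/(i:ℚ)^2)
      ≤ (97/144) * 1 := by
        apply mul_le_mul h0 h1 ?_ (by norm_num)
        exact Finset.prod_nonneg (fun r _ => sumsq_nonneg n _)
    _ = 97/144 := by norm_num

lemma prod_box2 (n : ℕ) (k2 : ℕ) :
    ∏ p : Fin (k2+2), (∑ i ∈ Finset.Icc (p.val+2) n, (1:ℚ)/(i:ℚ)^2) ≤ (97/144) * (61/144) := by
  rw [Fin.prod_univ_succ, Fin.prod_univ_succ]
  have h0 : (∑ i ∈ Finset.Icc ((0 : Fin (k2+2)).val+2) n, (1:ℚ)/(i:ℚ)^2) ≤ 97/144 := by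
    simp only [Fin.val_zero, Nat.zero_add]
    exact U2 n
  have h1 : (∑ i ∈ Finset.Icc (((0 : Fin (k2+1)).succ).val+2) n, (1:ℚ)/(i:ℚ)^2) ≤ 61/144 := by
    have e : ((0 : Fin (k2+1)).succ).val + 2 = 3 := by simp
    rw [e]
    exact U3 n
  have h2 : ∏ r : Fin k2, (∑ i ∈ Finset.Icc ((r.succ.succ).val+2) n, (1:ℚ)/(i:ℚ)^2) ≤ 1 :=
    prod_tail_le_one n k2 (fun r => (r.succ.succ).val+2) (fun r => Nat.le_add_left 2 _)
  have hn1 : (0:ℚ) ≤ ∑ i ∈ Finset.Icc (((0 : Fin (k2+1)).succ).val+2) n, (1:ℚ)/(i:ℚ)^2 :=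
    sumsq_nonneg n _
  have hn2 : (0:ℚ) ≤ ∏ r : Fin k2, (∑ i ∈ Finset.Icc ((r.succ.succ).val+2) n, (1:ℚ)/(i:ℚ)^2) :=
    Finset.prod_nonneg (fun r _ => sumsq_nonneg n _)
  calc (∑ i ∈ Finset.Icc ((0 : Fin (k2+2)).val+2) n, (1:ℚ)/(i:ℚ)^2) *
      ((∑ i ∈ Finset.Icc (((0 : Fin (k2+1)).succ).val+2) n, (1:ℚ)/(i:ℚ)^2) *
        ∏ r : Fin k2, (∑ i ∈ Finset.Icc ((r.succ.succ).val+2) n, (1:ℚ)/(i:ℚ)^2))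
      ≤ (97/144) * ((61/144) * 1) := by
        apply mul_le_mul h0 ?_ (mul_nonneg hn1 hn2) (by norm_num)
        apply mul_le_mul h1 h2 hn2 (by norm_num)
    _ = (97/144) * (61/144) := by norm_num

lemma H_lt_one (f : Polynomial ℤ) (hf0 : f ≠ 0) (hcoeff : ∀ i, 0 ≤ f.coeff i)
    (k n : ℕ) (s : Fin k → ℕ) (hds : ∀ j, 2 ≤ f.natDegree * s j)
    (hk : 2 ≤ k) : Hsum f k n s < 1 := by
  obtain ⟨k2, rfl⟩ : ∃ k2, k = k2 + 2 := ⟨k - 2, by omega⟩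
  unfold Hsum
  set F := (Fintype.piFinset fun _ : Fin (k2+2) => Finset.Icc 1 n).filter
      (fun x => ∀ p q : Fin (k2+2), p < q → x p < x q) with hF
  have hstep1 : ∑ x ∈ F, ∏ j, (1:ℚ) / ((f.eval ((x j : ℕ):ℤ) : ℤ) : ℚ) ^ (s j)
      ≤ ∑ x ∈ F, ∏ j, (1:ℚ)/((x j : ℕ):ℚ)^2 := by
    apply Finset.sum_le_sum
    intro x hx
    have hmem := Fintype.mem_piFinset.mp (Finset.mem_filter.mp hx).1
    apply Finset.prod_le_prod
    · intro j _
      exact fac_nonneg hf0 hcoeff (x j) (Finset.mem_Icc.mp (hmem j)).1 (s j)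
    · intro j _
      exact fac_le_sq hf0 hcoeff (hds j) (x j) (Finset.mem_Icc.mp (hmem j)).1
  refine lt_of_le_of_lt hstep1 ?_
  rw [← Finset.sum_filter_add_sum_filter_not F (fun x => x 0 = 1)]
  -- part 1 : x 0 = 1
  have hpart1 : ∑ x ∈ F.filter (fun x => x 0 = 1), ∏ j, (1:ℚ)/((x j : ℕ):ℚ)^2
      ≤ 97/144 := by
    set b1 : Fin (k2+2) → Finset ℕ :=
      fun p => if p.val = 0 then Finset.Icc 1 1 else Finset.Icc (p.val+1) n with hb1
    have hsub : F.filter (fun x => x 0 = 1) ⊆ Fintype.piFinset b1 := by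
      intro x hx
      obtain ⟨hxF, hx0⟩ := Finset.mem_filter.mp hx
      obtain ⟨hpi, hmono⟩ := Finset.mem_filter.mp hxF
      have hpi' := Fintype.mem_piFinset.mp hpi
      apply Fintype.mem_piFinset.mpr
      intro p
      by_cases hp : p.val = 0
      · have hp0 : p = 0 := Fin.ext hp
        subst hp0
        have hb : b1 0 = Finset.Icc 1 1 := by simp only [hb1, Fin.val_zero, if_pos]
        rw [hb, Finset.mem_Icc]
        omega
      · have hb : b1 p = Finset.Icc (p.val+1) n := by
          simp only [hb1]
          rw [if_neg hp]
        rw [hb]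
        have hlow := strict_ge x hmono p.val p.isLt
        rw [Fin.eta] at hlow
        have hup := (Finset.mem_Icc.mp (hpi' p)).2
        rw [Finset.mem_Icc]
        omega
    refine le_trans (Finset.sum_le_sum_of_subset_of_nonneg hsub
      (fun x _ _ => Finset.prod_nonneg (fun j _ => by positivity))) ?_
    rw [← Finset.prod_univ_sum b1 (fun _ i => (1:ℚ)/(i:ℚ)^2)]
    rw [Fin.prod_univ_succ]
    have h0 : (∑ i ∈ b1 0, (1:ℚ)/(i:ℚ)^2) = 1 := by
      have hb : b1 0 = Finset.Icc 1 1 := by simp only [hb1, Fin.val_zero, if_pos]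
      rw [hb, Finset.Icc_self, Finset.sum_singleton]
      norm_num
    rw [h0, one_mul]
    have he : ∀ q : Fin (k2+1), b1 q.succ = Finset.Icc (q.val+2) n := by
      intro q
      simp only [hb1, Fin.val_succ]
      rw [if_neg (by omega)]
    calc ∏ q : Fin (k2+1), (∑ i ∈ b1 q.succ, (1:ℚ)/(i:ℚ)^2)
        = ∏ q : Fin (k2+1), (∑ i ∈ Finset.Icc (q.val+2) n, (1:ℚ)/(i:ℚ)^2) := by
          apply Finset.prod_congr rfl
          intro q _
          rw [he q]
      _ ≤ 97/144 := prod_box1 n k2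
  -- part 2 : x 0 ≠ 1
  have hpart2 : ∑ x ∈ F.filter (fun x => ¬ (x 0 = 1)), ∏ j, (1:ℚ)/((x j : ℕ):ℚ)^2
      ≤ (97/144) * (61/144) := by
    have hsub : F.filter (fun x => ¬ (x 0 = 1)) ⊆
        Fintype.piFinset (fun p : Fin (k2+2) => Finset.Icc (p.val+2) n) := by
      intro x hx
      obtain ⟨hxF, hx0⟩ := Finset.mem_filter.mp hx
      obtain ⟨hpi, hmono⟩ := Finset.mem_filter.mp hxF
      have hpi' := Fintype.mem_piFinset.mp hpi
      apply Fintype.mem_piFinset.mpr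
      intro p
      have hlow := strict_ge x hmono p.val p.isLt
      rw [Fin.eta] at hlow
      have hup := (Finset.mem_Icc.mp (hpi' p)).2
      have h01 := (Finset.mem_Icc.mp (hpi' 0)).1
      rw [Finset.mem_Icc]
      omega
    refine le_trans (Finset.sum_le_sum_of_subset_of_nonneg hsub
      (fun x _ _ => Finset.prod_nonneg (fun j _ => by positivity))) ?_
    rw [← Finset.prod_univ_sum (fun p : Fin (k2+2) => Finset.Icc (p.val+2) n) (fun _ i => (1:ℚ)/(i:ℚ)^2)]
    exact prod_box2 n k2
  have : (97:ℚ)/144 + (97/144) * (61/144) < 1 := by norm_num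
  linarith
lemma H_pos (f : Polynomial ℤ) (hf0 : f ≠ 0) (hcoeff : ∀ i, 0 ≤ f.coeff i)
    (k n : ℕ) (hkn : k ≤ n) (s : Fin k → ℕ) : 0 < Hsum f k n s := by
  unfold Hsum
  apply Finset.sum_pos'
  · intro x hx
    have hmem := Fintype.mem_piFinset.mp (Finset.mem_filter.mp hx).1
    exact Finset.prod_nonneg fun j _ =>
      fac_nonneg hf0 hcoeff _ (Finset.mem_Icc.mp (hmem j)).1 _
  · refine ⟨fun p => p.val + 1, ?_, ?_⟩
    · rw [Finset.mem_filter]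
      constructor
      · apply Fintype.mem_piFinset.mpr
        intro p
        have hp := p.isLt
        show p.val + 1 ∈ Finset.Icc 1 n
        rw [Finset.mem_Icc]
        omega
      · intro p q h
        rw [Fin.lt_def] at h
        show p.val + 1 < q.val + 1
        omega
    · exact Finset.prod_pos fun j _ => fac_pos hf0 hcoeff _ (Nat.le_add_left 1 _) _

lemma Hstar_pos (f : Polynomial ℤ) (hf0 : f ≠ 0) (hcoeff : ∀ i, 0 ≤ f.coeff i)
    (k n : ℕ) (hkn : k ≤ n) (hn : 1 ≤ n) (s : Fin k → ℕ) : 0 < HsumStar f k n s := by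
  unfold HsumStar
  apply Finset.sum_pos'
  · intro x hx
    have hmem := Fintype.mem_piFinset.mp (Finset.mem_filter.mp hx).1
    exact Finset.prod_nonneg fun j _ =>
      fac_nonneg hf0 hcoeff _ (Finset.mem_Icc.mp (hmem j)).1 _
  · refine ⟨fun _ => 1, ?_, ?_⟩
    · rw [Finset.mem_filter]
      constructor
      · apply Fintype.mem_piFinset.mpr
        intro p
        show (1:ℕ) ∈ Finset.Icc 1 n
        rw [Finset.mem_Icc]
        omega
      · intro p q _
        exact le_refl _
    · exact Finset.prod_pos fun j _ => fac_pos hf0 hcoeff _ (le_refl 1) _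

lemma star_gt_one (f : Polynomial ℤ) (hf0 : f ≠ 0) (hcoeff : ∀ i, 0 ≤ f.coeff i)
    (k n : ℕ) (hk : 2 ≤ k) (hn : 2 ≤ n) (s : Fin k → ℕ) (h1 : f.eval 1 = 1) :
    1 < HsumStar f k n s := by
  unfold HsumStar
  set F := (Fintype.piFinset fun _ : Fin k => Finset.Icc 1 n).filter
      (fun x => ∀ p q : Fin k, p ≤ q → x p ≤ x q) with hF
  set a : Fin k → ℕ := fun _ => 1 with ha
  set b : Fin k → ℕ := fun p => if p.val + 1 = k then 2 else 1 with hb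
  have hbvals : ∀ p : Fin k, b p = 1 ∨ b p = 2 := by
    intro p
    simp only [hb]
    split_ifs <;> simp
  have haF : a ∈ F := by
    rw [hF, Finset.mem_filter]
    refine ⟨Fintype.mem_piFinset.mpr fun p => ?_, fun p q _ => le_refl _⟩
    simp only [ha, Finset.mem_Icc]
    omega
  have hbF : b ∈ F := by
    rw [hF, Finset.mem_filter]
    constructor
    · apply Fintype.mem_piFinset.mpr
      intro p
      rcases hbvals p with h | h <;> rw [h, Finset.mem_Icc] <;> omega
    · intro p q hpq
      have hv : p.val ≤ q.val := hpq
      have hq := q.isLt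
      simp only [hb]
      split_ifs <;> omega
  have hab : a ≠ b := by
    intro h
    have hc := congrFun h ⟨k-1, by omega⟩
    simp only [ha, hb] at hc
    rw [if_pos (by omega)] at hc
    exact absurd hc (by norm_num)
  have hsub : ({a, b} : Finset (Fin k → ℕ)) ⊆ F := by
    intro x hx
    rcases Finset.mem_insert.mp hx with rfl | hx
    · exact haF
    · rw [Finset.mem_singleton.mp hx]
      exact hbF
  have hnonneg : ∀ x ∈ F, x ∉ ({a, b} : Finset (Fin k → ℕ)) →
      0 ≤ ∏ j, (1:ℚ) / ((f.eval ((x j : ℕ):ℤ) : ℤ) : ℚ) ^ (s j) := by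
    intro x hx _
    have hmem := Fintype.mem_piFinset.mp (Finset.mem_filter.mp hx).1
    exact Finset.prod_nonneg fun j _ =>
      fac_nonneg hf0 hcoeff _ (Finset.mem_Icc.mp (hmem j)).1 _
  have hsum := Finset.sum_le_sum_of_subset_of_nonneg hsub hnonneg
  rw [Finset.sum_pair hab] at hsum
  have hta : ∏ j, (1:ℚ) / ((f.eval ((a j : ℕ):ℤ) : ℤ) : ℚ) ^ (s j) = 1 := by
    apply Finset.prod_eq_one
    intro j _
    simp only [ha]
    rw [show ((1:ℕ):ℤ) = (1:ℤ) from rfl, h1]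
    norm_num
  have htb : 0 < ∏ j, (1:ℚ) / ((f.eval ((b j : ℕ):ℤ) : ℤ) : ℚ) ^ (s j) := by
    apply Finset.prod_pos
    intro j _
    apply fac_pos hf0 hcoeff
    rcases hbvals j with h | h <;> omega
  rw [hta] at hsum
  linarith

lemma sum_isq2 (n : ℕ) : ∑ i ∈ Finset.Icc 1 n, 1/((i:ℚ)^2+2) ≤ 1/3 + 1/6 + 1/11 + 1/3 := by
  set M := max n 3 with hM
  have h3 : 3 ≤ M := le_max_right _ _
  refine le_trans (sum_mono_upper _ (by intro i; positivity) 1 n M (le_max_left _ _)) ?_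
  have e1 : Finset.Icc 1 M = Finset.Ioc 0 M := (Finset.Icc_add_one_left_eq_Ioc 0 M)
  rw [e1, ← Finset.sum_Ioc_consecutive _ (by omega : 0 ≤ 3) h3]
  have h03 : Finset.Ioc 0 3 = ({1,2,3} : Finset ℕ) := by decide
  have e2 : Finset.Ioc 3 M = Finset.Icc 4 M := (Finset.Icc_add_one_left_eq_Ioc 3 M).symm
  rw [h03, e2]
  have hhead : ∑ i ∈ ({1,2,3} : Finset ℕ), (1:ℚ)/((i:ℚ)^2+2) = 1/3 + 1/6 + 1/11 := by
    norm_num [Finset.sum_insert, Finset.mem_insert]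
  rw [hhead]
  have htail : ∑ i ∈ Finset.Icc 4 M, (1:ℚ)/((i:ℚ)^2+2) ≤ 1/3 := by
    have inner : ∀ i ∈ Finset.Icc 4 M, (1:ℚ)/((i:ℚ)^2+2) ≤ 1/((i:ℚ)*((i:ℚ)-1)) := by
      intro i hi
      have h4 : (4:ℚ) ≤ (i:ℚ) := by exact_mod_cast (Finset.mem_Icc.mp hi).1
      apply one_div_le_one_div_of_le
      · nlinarith
      · nlinarith
    refine le_trans (Finset.sum_le_sum inner) ?_
    have := tele_le M 4 (by omega)
    have e4 : (((4:ℕ):ℚ)-1) = 3 := by norm_num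
    rw [e4] at this
    linarith
  linarith

lemma sum_icube (n : ℕ) : ∑ i ∈ Finset.Icc 1 n, 1/((i:ℚ)^3+1) ≤ 1/2 + 1/9 + 1/6 := by
  set M := max n 2 with hM
  have h2 : 2 ≤ M := le_max_right _ _
  refine le_trans (sum_mono_upper _ (by intro i; positivity) 1 n M (le_max_left _ _)) ?_
  have e1 : Finset.Icc 1 M = Finset.Ioc 0 M := (Finset.Icc_add_one_left_eq_Ioc 0 M)
  rw [e1, ← Finset.sum_Ioc_consecutive _ (by omega : 0 ≤ 2) h2]
  have h02 : Finset.Ioc 0 2 = ({1,2} : Finset ℕ) := by decide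
  have e2 : Finset.Ioc 2 M = Finset.Icc 3 M := (Finset.Icc_add_one_left_eq_Ioc 2 M).symm
  rw [h02, e2]
  have hhead : ∑ i ∈ ({1,2} : Finset ℕ), (1:ℚ)/((i:ℚ)^3+1) = 1/2 + 1/9 := by
    norm_num [Finset.sum_insert, Finset.mem_insert]
  rw [hhead]
  have htail : ∑ i ∈ Finset.Icc 3 M, (1:ℚ)/((i:ℚ)^3+1) ≤ 1/6 := by
    have inner : ∀ i ∈ Finset.Icc 3 M, (1:ℚ)/((i:ℚ)^3+1) ≤ (1/3) * (1/((i:ℚ)*((i:ℚ)-1))) := by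
      intro i hi
      have h3 : (3:ℚ) ≤ (i:ℚ) := by exact_mod_cast (Finset.mem_Icc.mp hi).1
      rw [mul_one_div, div_le_div_iff₀ (by positivity) (by nlinarith)]
      have hcube : (3:ℚ)*(i:ℚ)^2 ≤ (i:ℚ)^3 := by
        nlinarith [mul_nonneg (sq_nonneg (i:ℚ)) (by linarith : (0:ℚ) ≤ (i:ℚ)-3)]
      nlinarith
    refine le_trans (Finset.sum_le_sum inner) ?_
    rw [← Finset.mul_sum]
    have := tele_le M 3 (by omega)
    have e3 : (((3:ℕ):ℚ)-1) = 2 := by norm_num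
    rw [e3] at this
    linarith
  linarith

lemma no_int01 {x : ℚ} (h0 : 0 < x) (h1 : x < 1) : ¬∃ z : ℤ, x = (z:ℚ) := by
  rintro ⟨z, rfl⟩
  have hz0 : (0:ℤ) < z := by exact_mod_cast h0
  have hz1 : z < 1 := by exact_mod_cast h1
  omega

lemma no_int12 {x : ℚ} (h0 : 1 < x) (h1 : x < 2) : ¬∃ z : ℤ, x = (z:ℚ) := by
  rintro ⟨z, rfl⟩
  have hz0 : (1:ℤ) < z := by exact_mod_cast h0
  have hz1 : z < 2 := by exact_mod_cast h1
  omega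
set_option maxHeartbeats 2000000 in
lemma xsq1_12 : ∑ i ∈ Finset.Icc (1:ℕ) 12, (1:ℚ)/((i:ℚ)^2+1) < 1 := by
  have h : Finset.Icc (1:ℕ) 12 = ({1,2,3,4,5,6,7,8,9,10,11,12} : Finset ℕ) := by decide
  rw [h]
  norm_num [Finset.sum_insert, Finset.mem_insert]

set_option maxHeartbeats 2000000 in
lemma xsq1_13 : 1 < ∑ i ∈ Finset.Icc (1:ℕ) 13, (1:ℚ)/((i:ℚ)^2+1) := by
  have h : Finset.Icc (1:ℕ) 13 = ({1,2,3,4,5,6,7,8,9,10,11,12,13} : Finset ℕ) := by decide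
  rw [h]
  norm_num [Finset.sum_insert, Finset.mem_insert]

lemma xsq1_lt2 (n : ℕ) (hn : 1 ≤ n) : ∑ i ∈ Finset.Icc 1 n, (1:ℚ)/((i:ℚ)^2+1) < 2 := by
  have hsplit : Finset.Icc 1 n = insert 1 (Finset.Icc 2 n) := by
    ext x; simp only [Finset.mem_Icc, Finset.mem_insert]; omega
  rw [hsplit, Finset.sum_insert (by simp)]
  have htail : ∑ i ∈ Finset.Icc 2 n, (1:ℚ)/((i:ℚ)^2+1) ≤ 97/144 := by
    refine le_trans (Finset.sum_le_sum ?_) (U2 n)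
    intro i hi
    have h2 : (2:ℚ) ≤ (i:ℚ) := by exact_mod_cast (Finset.mem_Icc.mp hi).1
    apply one_div_le_one_div_of_le (by nlinarith)
    nlinarith
  have e : (1:ℚ)/(((1:ℕ):ℚ)^2+1) = 1/2 := by norm_num
  rw [e]
  linarith

lemma xsq1_ne (n : ℕ) (hn : 2 ≤ n) :
    (∑ i ∈ Finset.Icc 1 n, (1:ℚ)/((i:ℚ)^2+1) < 1) ∨
    (1 < ∑ i ∈ Finset.Icc 1 n, (1:ℚ)/((i:ℚ)^2+1) ∧
      ∑ i ∈ Finset.Icc 1 n, (1:ℚ)/((i:ℚ)^2+1) < 2) := by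
  rcases le_or_gt n 12 with h | h
  · left
    exact lt_of_le_of_lt (sum_mono_upper _ (by intro i; positivity) 1 n 12 h) xsq1_12
  · right
    refine ⟨lt_of_lt_of_le xsq1_13 (sum_mono_upper _ (by intro i; positivity) 1 13 n (by omega)), ?_⟩
    exact xsq1_lt2 n (by omega)

lemma star_lt_two (f : Polynomial ℤ) (hf0 : f ≠ 0) (hcoeff : ∀ i, 0 ≤ f.coeff i)
    (k n : ℕ) (hn : 1 ≤ n) (s : Fin k → ℕ) (hds : ∀ j, 2 ≤ f.natDegree * s j) :
    HsumStar f k n s < 2 := by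
  have hterm : ∀ i, 1 ≤ i → i ≤ n → ∀ j : Fin k,
      (1:ℚ) / ((f.eval (i:ℤ) : ℤ) : ℚ) ^ (s j) ≤ 1/(i:ℚ)^2 := by
    intro i hi _ j
    exact fac_le_sq hf0 hcoeff (hds j) i hi
  have h1 := star_le_Aq f hf0 hcoeff k n s (fun i => 1/(i:ℚ)^2) hterm
  have h2 := C1up (fun i => 1/(i:ℚ)^2) n (fun u => by positivity)
      (fun u _ => rfl) (by norm_num) hn k
  have hnq : (1:ℚ) ≤ (n:ℚ) := by exact_mod_cast hn
  have h3 : ((n:ℚ)-1)/((n:ℚ)+1) < 1 := by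
    rw [div_lt_one (by linarith)]
    linarith
  linarith

lemma star_lt_one (f : Polynomial ℤ) (hf0 : f ≠ 0) (hcoeff : ∀ i, 0 ≤ f.coeff i)
    (k n : ℕ) (s : Fin k → ℕ) (hds : ∀ j, 2 ≤ f.natDegree * s j) (hs : ∀ j, 1 ≤ s j)
    (hk : 2 ≤ k) (hn : 1 ≤ n) (h2 : 2 ≤ f.eval 1) :
    HsumStar f k n s < 1 := by
  set yh : ℕ → ℚ := fun i => if i = 1 then 1/2 else 1/(i:ℚ)^2 with hyh
  have hy0 : ∀ u, 0 ≤ yh u := by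
    intro u
    simp only [hyh]
    split_ifs <;> positivity
  have hy2 : ∀ u, 2 ≤ u → yh u = 1/(u:ℚ)^2 := by
    intro u hu
    simp only [hyh]
    rw [if_neg (by omega)]
  have hy1 : yh 1 = 1/2 := by simp [hyh]
  have hterm : ∀ i, 1 ≤ i → i ≤ n → ∀ j : Fin k,
      (1:ℚ) / ((f.eval (i:ℤ) : ℤ) : ℚ) ^ (s j) ≤ yh i := by
    intro i hi _ j
    rcases Nat.eq_or_lt_of_le hi with h | h
    · rw [← h, hy1]
      exact fac_le_half hf0 hcoeff h2 (hs j)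
    · rw [hy2 i (by omega)]
      exact fac_le_sq hf0 hcoeff (hds j) i hi
  have h1 := star_le_Aq f hf0 hcoeff k n s yh hterm
  rcases Nat.eq_or_lt_of_le hk with hk2 | hk3
  · subst hk2
    have h2' := C2two yh n hy0 hy2 hy1 hn
    have : (2567:ℚ)/2592 < 1 := by norm_num
    linarith
  · have h2' := C2up yh n hy0 hy2 hy1 hn k
    have h3 := q_two_pow k (by omega)
    linarith
lemma k1_main (f : Polynomial ℤ) (hf0 : f ≠ 0) (hcoeff : ∀ i, 0 ≤ f.coeff i)
    (n : ℕ) (hn : 1 ≤ n) (s0 : ℕ) (hs0 : 1 ≤ s0)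
    (hdeg : 2 ≤ f.natDegree ∨ (f.natDegree = 1 ∧ 2 ≤ s0))
    (hexc : ¬ (f.eval 1 = 1 ∧ n = 1)) :
    ¬∃ z : ℤ, (∑ i ∈ Finset.Icc 1 n, (1:ℚ)/((f.eval (i:ℤ) : ℤ):ℚ)^s0) = (z:ℚ) := by
  have hd1 : 1 ≤ f.natDegree := by rcases hdeg with h | ⟨h,_⟩ <;> omega
  have hds : 2 ≤ f.natDegree * s0 := by
    rcases hdeg with h | ⟨h, h2⟩
    · calc 2 ≤ f.natDegree := h
        _ = f.natDegree * 1 := (mul_one _).symm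
        _ ≤ f.natDegree * s0 := Nat.mul_le_mul_left _ hs0
    · rw [h, one_mul]; exact h2
  have hpos : 0 < ∑ i ∈ Finset.Icc 1 n, (1:ℚ)/((f.eval (i:ℤ) : ℤ):ℚ)^s0 := by
    apply Finset.sum_pos
    · intro i hi
      exact fac_pos hf0 hcoeff i (Finset.mem_Icc.mp hi).1 s0
    · exact ⟨1, Finset.mem_Icc.mpr ⟨le_refl 1, hn⟩⟩
  by_cases h1 : f.eval 1 = 1
  · -- f(1) = 1, so n ≥ 2, and 1 < σ < 2
    have hn2 : 2 ≤ n := by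
      rcases Nat.eq_or_lt_of_le hn with h | h
      · exact absurd ⟨h1, h.symm⟩ hexc
      · omega
    have hsplit : Finset.Icc 1 n = insert 1 (Finset.Icc 2 n) := by
      ext x; simp only [Finset.mem_Icc, Finset.mem_insert]; omega
    have e1 : (1:ℚ)/((f.eval ((1:ℕ):ℤ) : ℤ):ℚ)^s0 = 1 := by
      rw [show ((1:ℕ):ℤ) = (1:ℤ) from rfl, h1]
      norm_num
    have hsum_eq : ∑ i ∈ Finset.Icc 1 n, (1:ℚ)/((f.eval (i:ℤ) : ℤ):ℚ)^s0
        = 1 + ∑ i ∈ Finset.Icc 2 n, (1:ℚ)/((f.eval (i:ℤ) : ℤ):ℚ)^s0 := by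
      rw [hsplit, Finset.sum_insert (by simp), e1]
    have htail_pos : 0 < ∑ i ∈ Finset.Icc 2 n, (1:ℚ)/((f.eval (i:ℤ) : ℤ):ℚ)^s0 := by
      apply Finset.sum_pos
      · intro i hi
        exact fac_pos hf0 hcoeff i (by have := (Finset.mem_Icc.mp hi).1; omega) s0
      · exact ⟨2, Finset.mem_Icc.mpr ⟨le_refl 2, hn2⟩⟩
    have htail_le : ∑ i ∈ Finset.Icc 2 n, (1:ℚ)/((f.eval (i:ℤ) : ℤ):ℚ)^s0 ≤ 97/144 := by
      refine le_trans (Finset.sum_le_sum ?_) (U2 n)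
      intro i hi
      exact fac_le_sq hf0 hcoeff hds i (by have := (Finset.mem_Icc.mp hi).1; omega)
    apply no_int12
    · rw [hsum_eq]; linarith
    · rw [hsum_eq]; linarith
  · have h2 : 2 ≤ f.eval 1 := by
      have := eval1_pos hf0 hcoeff
      omega
    by_cases hn1 : n = 1
    · subst hn1
      have heq : ∑ i ∈ Finset.Icc (1:ℕ) 1, (1:ℚ)/((f.eval (i:ℤ) : ℤ):ℚ)^s0
          = (1:ℚ)/((f.eval ((1:ℕ):ℤ) : ℤ):ℚ)^s0 := by
        rw [Finset.Icc_self, Finset.sum_singleton]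
      apply no_int01 hpos
      rw [heq]
      have := fac_le_half hf0 hcoeff h2 hs0
      linarith
    · have hn2 : 2 ≤ n := by omega
      by_cases hs2 : 2 ≤ s0
      · -- f(i) ≥ i+1, s0 ≥ 2
        apply no_int01 hpos
        have hup : ∑ i ∈ Finset.Icc 1 n, (1:ℚ)/((f.eval (i:ℤ) : ℤ):ℚ)^s0
            ≤ 1 - 1/((n:ℚ)+1) := by
          refine le_trans (Finset.sum_le_sum ?_) (tele2 n)
          intro i hi
          have hi1 : 1 ≤ i := (Finset.mem_Icc.mp hi).1
          have hiz : (1:ℤ) ≤ (i:ℤ) := by exact_mod_cast hi1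
          have hiq : (1:ℚ) ≤ (i:ℚ) := by exact_mod_cast hi1
          have hEz : (i:ℤ)+1 ≤ f.eval (i:ℤ) := by
            have hP2 := P2 hf0 hcoeff (i:ℤ) hiz
            have hpow : (i:ℤ) ≤ (i:ℤ)^f.natDegree := by
              calc (i:ℤ) = (i:ℤ)^1 := (pow_one _).symm
                _ ≤ (i:ℤ)^f.natDegree := pow_le_pow_right₀ hiz hd1
            omega
          have hEq : ((i:ℚ))+1 ≤ ((f.eval (i:ℤ) : ℤ):ℚ) := by exact_mod_cast hEz
          calc (1:ℚ)/((f.eval (i:ℤ) : ℤ):ℚ)^s0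
              ≤ 1/((i:ℚ)+1)^s0 :=
                one_div_le_one_div_of_le (by positivity) (pow_le_pow_left₀ (by linarith) hEq s0)
            _ ≤ 1/((i:ℚ)+1)^2 :=
                one_div_le_one_div_of_le (by positivity) (pow_le_pow_right₀ (by linarith) hs2)
            _ ≤ 1/((i:ℚ)*((i:ℚ)+1)) :=
                one_div_le_one_div_of_le (by nlinarith) (by nlinarith)
        have hfrac : (0:ℚ) < 1/((n:ℚ)+1) := by positivity
        linarith
      · have hs01 : s0 = 1 := by omega
        subst hs01
        have hd2 : 2 ≤ f.natDegree := by
          rcases hdeg with h | ⟨h, hh⟩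
          · exact h
          · omega
        by_cases h3 : 3 ≤ f.eval 1
        · apply no_int01 hpos
          have hup : ∑ i ∈ Finset.Icc 1 n, (1:ℚ)/((f.eval (i:ℤ) : ℤ):ℚ)^1
              ≤ 1/3+1/6+1/11+1/3 := by
            refine le_trans (Finset.sum_le_sum ?_) (sum_isq2 n)
            intro i hi
            have hi1 : 1 ≤ i := (Finset.mem_Icc.mp hi).1
            have hiz : (1:ℤ) ≤ (i:ℤ) := by exact_mod_cast hi1
            have hEz : (i:ℤ)^2 + 2 ≤ f.eval (i:ℤ) := by
              have hP2 := P2 hf0 hcoeff (i:ℤ) hiz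
              have hpow : (i:ℤ)^2 ≤ (i:ℤ)^f.natDegree := pow_le_pow_right₀ hiz hd2
              omega
            have hEq : ((i:ℚ))^2+2 ≤ ((f.eval (i:ℤ) : ℤ):ℚ) := by exact_mod_cast hEz
            rw [pow_one]
            exact one_div_le_one_div_of_le (by positivity) hEq
          refine lt_of_le_of_lt hup (by norm_num)
        · have heval2 : f.eval 1 = 2 := by omega
          by_cases hd3 : 3 ≤ f.natDegree
          · apply no_int01 hpos
            have hup : ∑ i ∈ Finset.Icc 1 n, (1:ℚ)/((f.eval (i:ℤ) : ℤ):ℚ)^1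
                ≤ 1/2+1/9+1/6 := by
              refine le_trans (Finset.sum_le_sum ?_) (sum_icube n)
              intro i hi
              have hi1 : 1 ≤ i := (Finset.mem_Icc.mp hi).1
              have hiz : (1:ℤ) ≤ (i:ℤ) := by exact_mod_cast hi1
              have hEz : (i:ℤ)^3 + 1 ≤ f.eval (i:ℤ) := by
                have hP2 := P2 hf0 hcoeff (i:ℤ) hiz
                have hpow : (i:ℤ)^3 ≤ (i:ℤ)^f.natDegree := pow_le_pow_right₀ hiz hd3
                omega
              have hEq : ((i:ℚ))^3+1 ≤ ((f.eval (i:ℤ) : ℤ):ℚ) := by exact_mod_cast hEz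
              rw [pow_one]
              exact one_div_le_one_div_of_le (by positivity) hEq
            refine lt_of_le_of_lt hup (by norm_num)
          · have hdeq : f.natDegree = 2 := by omega
            rcases P4 hf0 hcoeff hdeq heval2 with hA | hB | hC
            · apply no_int01 hpos
              have hup : ∑ i ∈ Finset.Icc 1 n, (1:ℚ)/((f.eval (i:ℤ) : ℤ):ℚ)^1
                  ≤ 1 - 1/((n:ℚ)+1) := by
                refine le_trans (Finset.sum_le_sum ?_) (tele2 n)
                intro i hi
                have hi1 : 1 ≤ i := (Finset.mem_Icc.mp hi).1
                have hiz : (1:ℤ) ≤ (i:ℤ) := by exact_mod_cast hi1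
                have hiq : (1:ℚ) ≤ (i:ℚ) := by exact_mod_cast hi1
                have hEz := hA (i:ℤ) hiz
                have hEq : ((i:ℚ))^2+(i:ℚ) ≤ ((f.eval (i:ℤ) : ℤ):ℚ) := by exact_mod_cast hEz
                rw [pow_one]
                apply one_div_le_one_div_of_le (by nlinarith)
                nlinarith
              have hfrac : (0:ℚ) < 1/((n:ℚ)+1) := by positivity
              linarith
            · apply no_int01 hpos
              have hup : ∑ i ∈ Finset.Icc 1 n, (1:ℚ)/((f.eval (i:ℤ) : ℤ):ℚ)^1
                  ≤ ∑ i ∈ Finset.Icc 1 n, (1/2) * (1/(i:ℚ)^2) := by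
                refine Finset.sum_le_sum ?_
                intro i hi
                have hi1 : 1 ≤ i := (Finset.mem_Icc.mp hi).1
                have hiq : (1:ℚ) ≤ (i:ℚ) := by exact_mod_cast hi1
                have hiz : (1:ℤ) ≤ (i:ℤ) := by exact_mod_cast hi1
                have hEz := hB (i:ℤ) hiz
                have hEq : 2*((i:ℚ))^2 ≤ ((f.eval (i:ℤ) : ℤ):ℚ) := by exact_mod_cast hEz
                rw [pow_one, mul_one_div]
                have hEpos : (0:ℚ) < ((f.eval (i:ℤ) : ℤ):ℚ) := by nlinarith
                rw [div_le_div_iff₀ hEpos (by nlinarith : (0:ℚ) < (i:ℚ)^2)]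
                nlinarith
              have hsplit : Finset.Icc 1 n = insert 1 (Finset.Icc 2 n) := by
                ext x; simp only [Finset.mem_Icc, Finset.mem_insert]; omega
              have hsum2 : ∑ i ∈ Finset.Icc 1 n, (1/2) * (1/(i:ℚ)^2) ≤ (1/2) * (1 + 97/144) := by
                rw [← Finset.mul_sum]
                apply mul_le_mul_of_nonneg_left ?_ (by norm_num)
                rw [hsplit, Finset.sum_insert (by simp)]
                have := U2 n
                have e1 : (1:ℚ)/(((1:ℕ):ℚ))^2 = 1 := by norm_num
                rw [e1]
                linarith
              refine lt_of_le_of_lt (le_trans hup hsum2) (by norm_num)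
            · have hσ : ∑ i ∈ Finset.Icc 1 n, (1:ℚ)/((f.eval (i:ℤ) : ℤ):ℚ)^1
                  = ∑ i ∈ Finset.Icc 1 n, (1:ℚ)/((i:ℚ)^2+1) := by
                apply Finset.sum_congr rfl
                intro i _
                rw [hC ((i:ℕ):ℤ), pow_one]
                push_cast
                ring
              rcases xsq1_ne n hn2 with h | ⟨ha, hb⟩
              · apply no_int01 hpos
                rw [hσ]
                exact h
              · apply no_int12 <;> rw [hσ]
                · exact ha
                · exact hb

theorem stmt15' (f : Polynomial ℤ) (hf0 : f ≠ 0) (hcoeff : ∀ i, 0 ≤ f.coeff i)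
    (k n : ℕ) (hk : 1 ≤ k) (hkn : k ≤ n) (s : Fin k → ℕ) (hs : ∀ j, 1 ≤ s j)
    (hdeg : 2 ≤ f.natDegree ∨ (f.natDegree = 1 ∧ ∀ j, 2 ≤ s j)) :
    (((∃ m : ℕ, 1 ≤ m ∧ f = Polynomial.X ^ m) ∧ n = 1 ∧ k = 1) →
        Hsum f k n s = 1 ∧ HsumStar f k n s = 1) ∧
    (¬ ((∃ m : ℕ, 1 ≤ m ∧ f = Polynomial.X ^ m) ∧ n = 1 ∧ k = 1) →
        (¬ ∃ z : ℤ, Hsum f k n s = (z : ℚ)) ∧ ¬ ∃ z : ℤ, HsumStar f k n s = (z : ℚ)) := by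
  have hd1 : 1 ≤ f.natDegree := by rcases hdeg with h | ⟨h,_⟩ <;> omega
  have hds : ∀ j, 2 ≤ f.natDegree * s j := by
    intro j
    rcases hdeg with h | ⟨h, h2⟩
    · calc 2 ≤ f.natDegree := h
        _ = f.natDegree * 1 := (mul_one _).symm
        _ ≤ f.natDegree * s j := Nat.mul_le_mul_left _ (hs j)
    · rw [h, one_mul]; exact h2 j
  constructor
  · rintro ⟨⟨m, hm, hfm⟩, rfl, rfl⟩
    have h1 : f.eval 1 = 1 := by rw [hfm]; simp
    rw [Hsum_k1, HsumStar_k1]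
    have hval : ∑ i ∈ Finset.Icc (1:ℕ) 1, (1:ℚ)/((f.eval (i:ℤ) : ℤ):ℚ)^(s 0) = 1 := by
      rw [Finset.Icc_self, Finset.sum_singleton]
      norm_num [h1]
    exact ⟨hval, hval⟩
  · intro hexc
    by_cases hk1 : k = 1
    · subst hk1
      have hnexc : ¬ (f.eval 1 = 1 ∧ n = 1) := by
        rintro ⟨h1, rfl⟩
        exact hexc ⟨⟨f.natDegree, hd1, P3 hf0 hcoeff h1⟩, rfl, rfl⟩
      have hdeg' : 2 ≤ f.natDegree ∨ (f.natDegree = 1 ∧ 2 ≤ s 0) := by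
        rcases hdeg with h | ⟨h, h2⟩
        · exact Or.inl h
        · exact Or.inr ⟨h, h2 0⟩
      have hmain := k1_main f hf0 hcoeff n (by omega) (s 0) (hs 0) hdeg' hnexc
      constructor
      · rw [Hsum_k1]; exact hmain
      · rw [HsumStar_k1]; exact hmain
    · have hk2 : 2 ≤ k := by omega
      have hn2 : 2 ≤ n := by omega
      constructor
      · exact no_int01 (H_pos f hf0 hcoeff k n hkn s)
          (H_lt_one f hf0 hcoeff k n s hds hk2)
      · by_cases h1 : f.eval 1 = 1
        · exact no_int12 (star_gt_one f hf0 hcoeff k n hk2 hn2 s h1)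
            (star_lt_two f hf0 hcoeff k n (by omega) s hds)
        · have h2 : 2 ≤ f.eval 1 := by
            have := eval1_pos hf0 hcoeff
            omega
          exact no_int01 (Hstar_pos f hf0 hcoeff k n hkn (by omega) s)
            (star_lt_one f hf0 hcoeff k n s hds hs hk2 (by omega) h2)

theorem stmt15 (f : Polynomial ℤ) (hf0 : f ≠ 0) (hcoeff : ∀ i, 0 ≤ f.coeff i)
    (k n : ℕ) (hk : 1 ≤ k) (hkn : k ≤ n) (s : Fin k → ℕ) (hs : ∀ j, 1 ≤ s j)
    (hdeg : 2 ≤ f.natDegree ∨ (f.natDegree = 1 ∧ ∀ j, 2 ≤ s j)) :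
    (((∃ m : ℕ, 1 ≤ m ∧ f = Polynomial.X ^ m) ∧ n = 1 ∧ k = 1) →
        Hsum f k n s = 1 ∧ HsumStar f k n s = 1) ∧
    (¬ ((∃ m : ℕ, 1 ≤ m ∧ f = Polynomial.X ^ m) ∧ n = 1 ∧ k = 1) →
        (¬ ∃ z : ℤ, Hsum f k n s = (z : ℚ)) ∧ ¬ ∃ z : ℤ, HsumStar f k n s = (z : ℚ)) :=
  stmt15' f hf0 hcoeff k n hk hkn s hs hdeg
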